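/- arXiv:0708.3980 — 5 statements merged into one kernel-verified Lean document; each statement's English description precedes it below -/
import Mathlib

section
/- Let n m : ℕ with n, m ≥ 1, and let H : Matrix (Fin n × Fin m) (Fin n × Fin m) ℂ be Hermitian. Then the following are equivalent: (i) there exist positive semidefinite matrices H₁ H₂ : Matrix (Fin n × Fin m) (Fin n × Fin m) ℂ such that H = H₁ + Γ(H₂); (ii) for every ρ : Matrix (Fin n × Fin m) (Fin n × Fin m) ℂ such that ρ is positive semidefinite, ρ has trace 1, and Γ(ρ) is positive semidefinite, the trace Tr(ρ * H) is a real number and 0 ≤ (Tr(ρ * H)).re. -/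
open Matrix ComplexOrder

/-- Partial transpose with respect to the second tensor factor. -/
def partialTranspose {n m : ℕ} (X : Matrix (Fin n × Fin m) (Fin n × Fin m) ℂ) :
    Matrix (Fin n × Fin m) (Fin n × Fin m) ℂ :=
  fun p q => X (p.1, q.2) (q.1, p.2)

open scoped RealInnerProductSpace ComplexConjugate

set_option linter.unusedSectionVars false
set_option linter.unusedVariables false
set_option linter.unnecessarySimpa false

namespace PTaux


variable {n m : ℕ}

abbrev κ (n m : ℕ) := (Fin n × Fin m) × (Fin n × Fin m)
abbrev E (n m : ℕ) := EuclideanSpace ℂ (κ n m)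

noncomputable def enc (A : Matrix (Fin n × Fin m) (Fin n × Fin m) ℂ) : E n m :=
  (WithLp.equiv 2 _).symm fun p => A p.1 p.2

def dec (v : E n m) : Matrix (Fin n × Fin m) (Fin n × Fin m) ℂ :=
  Matrix.of fun i j => v (i, j)

@[simp] lemma dec_enc (A) : dec (enc A : E n m) = A := rfl
@[simp] lemma enc_dec (v : E n m) : enc (dec v) = v := rfl
@[simp] lemma dec_add (v w : E n m) : dec (v + w) = dec v + dec w := rfl
@[simp] lemma dec_zero : dec (0 : E n m) = 0 := rfl
@[simp] lemma dec_smul (c : ℝ) (v : E n m) : dec (c • v) = (c : ℂ) • dec v := by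
  ext i j
  simp [dec, Complex.real_smul]

lemma trace_conjTranspose_mul (A B : Matrix (Fin n × Fin m) (Fin n × Fin m) ℂ) :
    (Aᴴ * B).trace = ∑ p : κ n m, conj (A p.2 p.1) * B p.2 p.1 := by
  rw [Fintype.sum_prod_type]
  simp [trace, mul_apply, conjTranspose_apply]

lemma inner_enc (A B : Matrix (Fin n × Fin m) (Fin n × Fin m) ℂ) :
    ⟪(enc A : E n m), enc B⟫ = ((Aᴴ * B).trace).re := by
  have h1 : ⟪(enc A : E n m), enc B⟫ = ∑ p : κ n m, (conj (A p.1 p.2) * B p.1 p.2).re := by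
    simp [PiLp.inner_apply, Complex.inner, enc]
    exact Finset.sum_congr rfl fun _ _ => by ring
  rw [h1, trace_conjTranspose_mul, Complex.re_sum]
  exact Fintype.sum_equiv (Equiv.prodComm _ _) _ _ (fun p => rfl)


section Mats
variable {ι : Type*} [Fintype ι] [DecidableEq ι]

lemma psd_smul {A : Matrix ι ι ℂ} (hA : A.PosSemidef) {c : ℝ} (hc : 0 ≤ c) :
    ((c : ℂ) • A).PosSemidef := by
  rw [posSemidef_iff_dotProduct_mulVec]
  constructor
  · show _ᴴ = _
    rw [conjTranspose_smul]
    simp [hA.1.eq, Complex.conj_ofReal]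
  · intro x
    rw [smul_mulVec, dotProduct_smul, smul_eq_mul]
    exact mul_nonneg (by exact_mod_cast hc) (hA.dotProduct_mulVec_nonneg x)

lemma psd_trace_nonneg {A : Matrix ι ι ℂ} (hA : A.PosSemidef) : 0 ≤ A.trace := by
  rw [trace]
  refine Finset.sum_nonneg fun i _ => ?_
  have := hA.dotProduct_mulVec_nonneg (Pi.single i 1)
  simpa [dotProduct, mulVec, Pi.single_apply, Finset.mul_sum] using this

open scoped MatrixOrder in
lemma psd_factor {A : Matrix ι ι ℂ} (hA : A.PosSemidef) : ∃ C : Matrix ι ι ℂ, A = Cᴴ * C := by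
  obtain ⟨B, rfl⟩ := CStarAlgebra.nonneg_iff_eq_star_mul_self.mp hA.nonneg
  exact ⟨B, rfl⟩

lemma psd_trace_mul_nonneg {A B : Matrix ι ι ℂ} (hA : A.PosSemidef) (hB : B.PosSemidef) :
    0 ≤ (A * B).trace := by
  obtain ⟨C, rfl⟩ := psd_factor hB
  rw [← mul_assoc, trace_mul_comm]
  have : C * (A * Cᴴ) = C * A * Cᴴ := by rw [mul_assoc]
  rw [this]
  exact psd_trace_nonneg (hA.mul_mul_conjTranspose_same C)

lemma psd_of_trace_eq_zero {A : Matrix ι ι ℂ} (hA : A.PosSemidef) (h : A.trace = 0) :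
    A = 0 := by
  obtain ⟨C, rfl⟩ := psd_factor hA
  have h2 : ∑ i, ∑ k, Complex.normSq (C k i) = 0 := by
    have := congrArg Complex.re h
    simpa [trace, mul_apply, conjTranspose_apply, Complex.re_sum, Complex.normSq_eq_conj_mul_self,
      Complex.normSq_apply]
      using this
  have hC : C = 0 := by
    ext k i
    have h3 : ∀ i ∈ Finset.univ, (0:ℝ) ≤ ∑ k, Complex.normSq (C k i) :=
      fun i _ => Finset.sum_nonneg fun k _ => Complex.normSq_nonneg _
    have h4 := (Finset.sum_eq_zero_iff_of_nonneg h3).mp h2 i (Finset.mem_univ i)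
    have h5 : ∀ k ∈ Finset.univ, (0:ℝ) ≤ Complex.normSq (C k i) :=
      fun k _ => Complex.normSq_nonneg _
    have := (Finset.sum_eq_zero_iff_of_nonneg h5).mp h4 k (Finset.mem_univ k)
    simpa [Complex.normSq_eq_zero] using this
  simp [hC]

lemma outer_psd (x : ι → ℂ) : (Matrix.of fun i j => x i * conj (x j)).PosSemidef := by
  rw [posSemidef_iff_dotProduct_mulVec]
  constructor
  · ext i j
    simp [conjTranspose_apply, mul_comm]
  · intro y
    have key : star y ⬝ᵥ ((Matrix.of fun i j => x i * conj (x j)) *ᵥ y)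
        = (∑ i, conj (y i) * x i) * conj (∑ i, conj (y i) * x i) := by
      rw [_root_.map_sum, Finset.sum_mul]
      simp only [dotProduct, mulVec, of_apply, Pi.star_apply, RingHom.id_apply]
      refine Finset.sum_congr rfl fun i _ => ?_
      rw [Finset.mul_sum, Finset.mul_sum]
      refine Finset.sum_congr rfl fun j _ => ?_
      simp only [_root_.map_mul, Complex.conj_conj, Complex.star_def]
      ring
    rw [key, Complex.mul_conj']
    simpa using Complex.normSq_nonneg _

lemma quad_eq_trace (x : ι → ℂ) (X : Matrix ι ι ℂ) :
    star x ⬝ᵥ (X *ᵥ x) = ((Matrix.of fun i j => x i * conj (x j)) * X).trace := by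
  simp only [dotProduct, mulVec, trace, diag_apply, mul_apply, of_apply, Pi.star_apply,
    Complex.star_def, Finset.mul_sum]
  rw [Finset.sum_comm]
  refine Finset.sum_congr rfl fun i _ => Finset.sum_congr rfl fun j _ => by ring

lemma dot_conjTranspose (x : ι → ℂ) (X : Matrix ι ι ℂ) :
    star x ⬝ᵥ (Xᴴ *ᵥ x) = conj (star x ⬝ᵥ (X *ᵥ x)) := by
  have h1 : star x ⬝ᵥ (Xᴴ *ᵥ x) = star (X *ᵥ x) ⬝ᵥ x := by
    rw [dotProduct_mulVec, star_mulVec]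
  rw [h1, star_dotProduct]
  rfl

lemma sym_psd {X : Matrix ι ι ℂ}
    (h : ∀ A : Matrix ι ι ℂ, A.PosSemidef → 0 ≤ ((A * X).trace).re) :
    ((1/2 : ℂ) • (X + Xᴴ)).PosSemidef := by
  rw [posSemidef_iff_dotProduct_mulVec]
  constructor
  · show _ᴴ = _
    rw [conjTranspose_smul, conjTranspose_add, conjTranspose_conjTranspose]
    rw [add_comm]
    congr 1
    simp
  · intro x
    have hq : star x ⬝ᵥ (((1/2 : ℂ) • (X + Xᴴ)) *ᵥ x)
        = (((star x ⬝ᵥ (X *ᵥ x)).re : ℝ) : ℂ) := by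
      rw [smul_mulVec, dotProduct_smul, add_mulVec, dotProduct_add, dot_conjTranspose,
        Complex.add_conj, smul_eq_mul]
      push_cast
      ring
    rw [hq]
    rw [Complex.zero_le_real]
    have := h _ (outer_psd x)
    rwa [← quad_eq_trace] at this

end Mats

/-! ### partial transpose algebra -/

lemma pt_pt (X : Matrix (Fin n × Fin m) (Fin n × Fin m) ℂ) :
    partialTranspose (partialTranspose X) = X := rfl

lemma pt_add (X Y : Matrix (Fin n × Fin m) (Fin n × Fin m) ℂ) :
    partialTranspose (X + Y) = partialTranspose X + partialTranspose Y := rfl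

lemma pt_smul (c : ℂ) (X : Matrix (Fin n × Fin m) (Fin n × Fin m) ℂ) :
    partialTranspose (c • X) = c • partialTranspose X := rfl

lemma pt_zero : partialTranspose (0 : Matrix (Fin n × Fin m) (Fin n × Fin m) ℂ) = 0 := rfl

lemma pt_conjTranspose (X : Matrix (Fin n × Fin m) (Fin n × Fin m) ℂ) :
    (partialTranspose X)ᴴ = partialTranspose (Xᴴ) := by
  ext p q
  simp [partialTranspose, conjTranspose_apply]

lemma trace_pt (X : Matrix (Fin n × Fin m) (Fin n × Fin m) ℂ) :
    (partialTranspose X).trace = X.trace := rfl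

lemma trace_mul_pair (M N : Matrix (Fin n × Fin m) (Fin n × Fin m) ℂ) :
    (M * N).trace = ∑ pq : κ n m, M pq.1 pq.2 * N pq.2 pq.1 := by
  rw [Fintype.sum_prod_type]
  simp [trace, mul_apply]

lemma trace_mul_pt (X Y : Matrix (Fin n × Fin m) (Fin n × Fin m) ℂ) :
    (X * partialTranspose Y).trace = (partialTranspose X * Y).trace := by
  rw [trace_mul_pair, trace_mul_pair]
  have hσ : Function.Involutive
      (fun pq : κ n m => (((pq.1.1, pq.2.2), (pq.2.1, pq.1.2)) : κ n m)) := fun pq => rfl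
  exact Fintype.sum_equiv hσ.toPerm _ _ (fun pq => rfl)

/-! ### topology -/

lemma cont_coord (q : κ n m) : Continuous fun v : E n m => v q := by fun_prop

lemma isClosed_nonneg : IsClosed {z : ℂ | 0 ≤ z} := by
  have h : {z : ℂ | 0 ≤ z} = Complex.re ⁻¹' Set.Ici 0 ∩ Complex.im ⁻¹' {0} := by
    ext z
    simp [Complex.le_def, eq_comm]
  rw [h]
  exact (isClosed_Ici.preimage Complex.continuous_re).inter
    (isClosed_singleton.preimage Complex.continuous_im)

lemma quad_sum (v : E n m) (x : (Fin n × Fin m) → ℂ) :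
    star x ⬝ᵥ ((dec v) *ᵥ x) = ∑ p : κ n m, conj (x p.1) * v p * x p.2 := by
  rw [Fintype.sum_prod_type]
  simp [dotProduct, mulVec, dec, Finset.mul_sum, mul_assoc, Complex.star_def]

lemma isClosed_psd : IsClosed {v : E n m | (dec v).PosSemidef} := by
  have hrw : {v : E n m | (dec v).PosSemidef} =
      (⋂ p : κ n m, {v : E n m | conj (v (p.2, p.1)) = v p}) ∩
      (⋂ x : (Fin n × Fin m) → ℂ,
        {v : E n m | 0 ≤ ∑ p : κ n m, conj (x p.1) * v p * x p.2}) := by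
    ext v
    simp only [Set.mem_setOf_eq, Set.mem_inter_iff, Set.mem_iInter]
    constructor
    · intro hv
      refine ⟨fun p => ?_, fun x => ?_⟩
      · have h := congrFun (congrFun hv.1 p.1) p.2
        simpa [dec, conjTranspose_apply] using h
      · rw [← quad_sum]
        exact hv.dotProduct_mulVec_nonneg x
    · rintro ⟨h1, h2⟩
      rw [posSemidef_iff_dotProduct_mulVec]
      constructor
      · ext i j
        have := h1 (i, j)
        simpa [dec, conjTranspose_apply] using this
      · intro x
        rw [quad_sum]
        exact h2 x
  rw [hrw]
  refine IsClosed.inter (isClosed_iInter fun p => ?_) (isClosed_iInter fun x => ?_)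
  · exact isClosed_eq ((Complex.continuous_conj).comp (cont_coord _)) (cont_coord _)
  · have hc : Continuous fun v : E n m => ∑ p : κ n m, conj (x p.1) * v p * x p.2 :=
      continuous_finset_sum _ fun p _ =>
        (continuous_const.mul (cont_coord p)).mul continuous_const
    exact isClosed_nonneg.preimage hc

lemma norm_enc_le_trace {A : Matrix (Fin n × Fin m) (Fin n × Fin m) ℂ} (hA : A.PosSemidef) :
    ‖(enc A : E n m)‖ ≤ (A.trace).re := by
  obtain ⟨C, rfl⟩ := psd_factor hA
  set f : (Fin n × Fin m) → EuclideanSpace ℂ (Fin n × Fin m) :=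
    fun i => (WithLp.equiv 2 _).symm fun k => C k i with hf
  have hentry : ∀ i j, (Cᴴ * C) i j = (inner ℂ (f i) (f j) : ℂ) := by
    intro i j
    simp [mul_apply, conjTranspose_apply, PiLp.inner_apply, RCLike.inner_apply, hf,
      WithLp.equiv_symm_apply, mul_comm]
  have htr : ((Cᴴ * C).trace).re = ∑ i, ‖f i‖ ^ 2 := by
    rw [trace, Complex.re_sum]
    refine Finset.sum_congr rfl fun i _ => ?_
    rw [diag_apply, hentry i i, inner_self_eq_norm_sq_to_K (𝕜 := ℂ) (f i)]
    norm_cast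
  have hnorm : ‖(enc (Cᴴ * C) : E n m)‖
      = Real.sqrt (∑ p : κ n m, ‖(Cᴴ * C) p.1 p.2‖ ^ 2) := by
    rw [EuclideanSpace.norm_eq]
    rfl
  have hb : ∑ p : κ n m, ‖(Cᴴ * C) p.1 p.2‖ ^ 2 ≤ (∑ i, ‖f i‖ ^ 2) ^ 2 := by
    have h1 : ∀ p : κ n m, ‖(Cᴴ * C) p.1 p.2‖ ^ 2 ≤ ‖f p.1‖ ^ 2 * ‖f p.2‖ ^ 2 := by
      intro p
      rw [hentry]
      calc ‖(inner ℂ (f p.1) (f p.2) : ℂ)‖ ^ 2 ≤ (‖f p.1‖ * ‖f p.2‖) ^ 2 := by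
            have := norm_inner_le_norm (𝕜 := ℂ) (f p.1) (f p.2)
            exact pow_le_pow_left₀ (norm_nonneg _) this 2
        _ = ‖f p.1‖ ^ 2 * ‖f p.2‖ ^ 2 := by ring
    calc ∑ p : κ n m, ‖(Cᴴ * C) p.1 p.2‖ ^ 2
        ≤ ∑ p : κ n m, ‖f p.1‖ ^ 2 * ‖f p.2‖ ^ 2 := Finset.sum_le_sum fun p _ => h1 p
      _ = (∑ i, ‖f i‖ ^ 2) ^ 2 := by
          rw [Fintype.sum_prod_type, sq, Finset.sum_mul]
          exact Finset.sum_congr rfl fun i _ => by rw [Finset.mul_sum]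
  calc ‖(enc (Cᴴ * C) : E n m)‖
      = Real.sqrt (∑ p : κ n m, ‖(Cᴴ * C) p.1 p.2‖ ^ 2) := hnorm
    _ ≤ Real.sqrt ((∑ i, ‖f i‖ ^ 2) ^ 2) := Real.sqrt_le_sqrt hb
    _ = ∑ i, ‖f i‖ ^ 2 := Real.sqrt_sq (Finset.sum_nonneg fun i _ => sq_nonneg _)
    _ = ((Cᴴ * C).trace).re := htr.symm

@[simp] lemma enc_add (X Y : Matrix (Fin n × Fin m) (Fin n × Fin m) ℂ) :
    (enc (X + Y) : E n m) = enc X + enc Y := rfl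

/-! ### the cone -/

noncomputable def coneC (n m : ℕ) : ConvexCone ℝ (E n m) where
  carrier := {v | ∃ A B : Matrix (Fin n × Fin m) (Fin n × Fin m) ℂ,
    A.PosSemidef ∧ B.PosSemidef ∧ dec v = A + partialTranspose B}
  smul_mem' := by
    rintro c hc v ⟨A, B, hA, hB, hv⟩
    exact ⟨(c : ℂ) • A, (c : ℂ) • B, psd_smul hA hc.le, psd_smul hB hc.le, by
      rw [dec_smul, hv, smul_add, pt_smul]⟩
  add_mem' := by
    rintro v ⟨A, B, hA, hB, hv⟩ w ⟨A', B', hA', hB', hw⟩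
    exact ⟨A + A', B + B', hA.add hA', hB.add hB', by
      rw [dec_add, hv, hw, pt_add]; abel⟩

lemma mem_coneC {v : E n m} : v ∈ coneC n m ↔ ∃ A B : Matrix (Fin n × Fin m) (Fin n × Fin m) ℂ,
    A.PosSemidef ∧ B.PosSemidef ∧ dec v = A + partialTranspose B := Iff.rfl

noncomputable def ptL (n m : ℕ) : E n m →ₗ[ℂ] E n m where
  toFun v := enc (partialTranspose (dec v))
  map_add' v w := rfl
  map_smul' c v := rfl

lemma dec_ptL (v : E n m) : dec (ptL n m v) = partialTranspose (dec v) := rfl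

lemma inner_one (v : E n m) : ⟪(enc 1 : E n m), v⟫ = ((dec v).trace).re := by
  conv_lhs => rw [← enc_dec v]
  rw [inner_enc]
  simp

lemma isClosed_coneC : IsClosed ((coneC n m : Set (E n m))) := by
  rw [← isSeqClosed_iff_isClosed]
  intro u x hu hux
  choose A B hA hB hsum using hu
  obtain ⟨r, hr⟩ := (Metric.isBounded_range_of_tendsto u hux).subset_closedBall 0
  set R : ℝ := ‖(enc 1 : E n m)‖ * r with hR
  have hbound : ∀ k, ‖(enc (A k) : E n m)‖ ≤ R ∧ ‖(enc (B k) : E n m)‖ ≤ R := by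
    intro k
    have htr : ((dec (u k)).trace).re = (A k).trace.re + (B k).trace.re := by
      rw [hsum k, trace_add, trace_pt, Complex.add_re]
    have hA0 : 0 ≤ (A k).trace.re := ((Complex.le_def.mp (psd_trace_nonneg (hA k))).1).trans_eq' (by simp)
    have hB0 : 0 ≤ (B k).trace.re := ((Complex.le_def.mp (psd_trace_nonneg (hB k))).1).trans_eq' (by simp)
    have hinner : ((dec (u k)).trace).re ≤ R := by
      rw [← inner_one]
      calc ⟪(enc 1 : E n m), u k⟫ ≤ ‖(enc 1 : E n m)‖ * ‖u k‖ := real_inner_le_norm _ _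
        _ ≤ ‖(enc 1 : E n m)‖ * r := by
            refine mul_le_mul_of_nonneg_left ?_ (norm_nonneg _)
            have := hr (Set.mem_range_self k)
            rwa [Metric.mem_closedBall, dist_zero_right] at this
    constructor
    · exact (norm_enc_le_trace (hA k)).trans (by rw [htr] at hinner; linarith)
    · exact (norm_enc_le_trace (hB k)).trans (by rw [htr] at hinner; linarith)
  obtain ⟨α, -, φ, hφ, hαtend⟩ := tendsto_subseq_of_bounded
    (Metric.isBounded_closedBall (x := (0 : E n m)) (r := R))
    (fun k => by rw [Metric.mem_closedBall, dist_zero_right]; exact (hbound k).1)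
  obtain ⟨β, -, ψ, hψ, hβtend⟩ := tendsto_subseq_of_bounded
    (Metric.isBounded_closedBall (x := (0 : E n m)) (r := R))
    (fun k => by
      rw [Metric.mem_closedBall, dist_zero_right]
      exact (hbound (φ k)).2 : ∀ k, (fun j => (enc (B j) : E n m)) (φ k) ∈ _)
  have ha2 : Filter.Tendsto (fun k => (enc (A (φ (ψ k))) : E n m)) Filter.atTop (nhds α) :=
    hαtend.comp hψ.tendsto_atTop
  have hb2 : Filter.Tendsto (fun k => (enc (B (φ (ψ k))) : E n m)) Filter.atTop (nhds β) :=
    hβtend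
  have hu2 : Filter.Tendsto (fun k => u (φ (ψ k))) Filter.atTop (nhds x) :=
    hux.comp ((hφ.comp hψ).tendsto_atTop)
  have hptcont : Continuous (ptL n m) := (ptL n m).continuous_of_finiteDimensional
  have hpt2 : Filter.Tendsto (fun k => ptL n m (enc (B (φ (ψ k))))) Filter.atTop
      (nhds (ptL n m β)) := (hptcont.tendsto β).comp hb2
  have hsum2 : ∀ k, u (φ (ψ k)) = enc (A (φ (ψ k))) + ptL n m (enc (B (φ (ψ k)))) := by
    intro k
    conv_lhs => rw [← enc_dec (u (φ (ψ k))), hsum (φ (ψ k))]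
    rfl
  have h5 : Filter.Tendsto (fun k => u (φ (ψ k))) Filter.atTop (nhds (α + ptL n m β)) := by
    simp only [hsum2]
    exact ha2.add hpt2
  have hx : x = α + ptL n m β := tendsto_nhds_unique hu2 h5
  have hαpsd : (dec α).PosSemidef :=
    isClosed_psd.isSeqClosed (fun k => by simpa using hA (φ (ψ k))) ha2
  have hβpsd : (dec β).PosSemidef :=
    isClosed_psd.isSeqClosed (fun k => by simpa using hB (φ (ψ k))) hb2
  exact ⟨dec α, dec β, hαpsd, hβpsd, by rw [hx, dec_add, dec_ptL]⟩

noncomputable def coneP (n m : ℕ) : ProperCone ℝ (E n m) where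
  carrier := (coneC n m : Set (E n m))
  add_mem' ha hb := (coneC n m).add_mem ha hb
  zero_mem' := ⟨0, 0, .zero, .zero, by simp [pt_zero]⟩
  smul_mem' c v hv := by
    rcases eq_or_lt_of_le c.2 with h | h
    · have hc0 : c = 0 := NNReal.eq h.symm
      subst hc0
      rw [zero_smul]
      exact ⟨0, 0, .zero, .zero, by simp [pt_zero]⟩
    · exact (coneC n m).smul_mem h hv
  isClosed' := isClosed_coneC

end PTaux

open PTaux

theorem stmt_0 {n m : ℕ} (hn : 1 ≤ n) (hm : 1 ≤ m)
    (H : Matrix (Fin n × Fin m) (Fin n × Fin m) ℂ) (hH : H.IsHermitian) :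
    (∃ H₁ H₂ : Matrix (Fin n × Fin m) (Fin n × Fin m) ℂ,
      H₁.PosSemidef ∧ H₂.PosSemidef ∧ H = H₁ + partialTranspose H₂) ↔
    (∀ ρ : Matrix (Fin n × Fin m) (Fin n × Fin m) ℂ,
      ρ.PosSemidef → ρ.trace = 1 → (partialTranspose ρ).PosSemidef →
      ((ρ * H).trace).im = 0 ∧ 0 ≤ ((ρ * H).trace).re) := by
  constructor
  · rintro ⟨H₁, H₂, h1, h2, rfl⟩ ρ hρ htr hpt
    have e1 : (ρ * (H₁ + partialTranspose H₂)).trace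
        = (ρ * H₁).trace + (partialTranspose ρ * H₂).trace := by
      rw [mul_add, trace_add, trace_mul_pt]
    have hnn : 0 ≤ (ρ * (H₁ + partialTranspose H₂)).trace := by
      rw [e1]
      exact add_nonneg (psd_trace_mul_nonneg hρ h1) (psd_trace_mul_nonneg hpt h2)
    rw [Complex.le_def] at hnn
    exact ⟨by simpa using hnn.2.symm, by simpa using hnn.1⟩
  · intro hyp
    have h0 : ((0 : E n m)) ∈ coneC n m :=
      ⟨0, 0, .zero, .zero, by simp [pt_zero]⟩
    have hdd := ProperCone.innerDual_innerDual (coneP n m)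
    have hmem2 : (enc H : E n m) ∈
        ProperCone.innerDual (ProperCone.innerDual (coneP n m : Set (E n m)) : Set (E n m)) := by
      rw [ProperCone.mem_innerDual]
      intro y hy
      rw [SetLike.mem_coe, ProperCone.mem_innerDual] at hy
      have hy : ∀ x ∈ (coneC n m : Set (E n m)), 0 ≤ ⟪x, y⟫ := fun x hx => hy hx
      set X := dec y with hX
      have step1 : ∀ A : Matrix (Fin n × Fin m) (Fin n × Fin m) ℂ, A.PosSemidef →
          0 ≤ ((A * X).trace).re := by
        intro A hA
        have hin : (enc A : E n m) ∈ coneC n m := ⟨A, 0, hA, .zero, by simp [pt_zero]⟩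
        have h := hy (enc A) hin
        rwa [← enc_dec y, inner_enc, hA.1.eq] at h
      have step2 : ∀ B : Matrix (Fin n × Fin m) (Fin n × Fin m) ℂ, B.PosSemidef →
          0 ≤ ((B * partialTranspose X).trace).re := by
        intro B hB
        have hin : (enc (partialTranspose B) : E n m) ∈ coneC n m :=
          ⟨0, B, .zero, hB, by simp⟩
        have h := hy _ hin
        rw [← enc_dec y, inner_enc, pt_conjTranspose, hB.1.eq] at h
        rwa [trace_mul_pt]
      set ρ := (1/2 : ℂ) • (X + Xᴴ) with hρdef
      have hρ : ρ.PosSemidef := sym_psd step1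
      have hptρ : (partialTranspose ρ).PosSemidef := by
        have hrw : partialTranspose ρ
            = (1/2 : ℂ) • (partialTranspose X + (partialTranspose X)ᴴ) := by
          rw [hρdef, pt_smul, pt_add, pt_conjTranspose]
        rw [hrw]
        exact sym_psd step2
      have key : ⟪y, (enc H : E n m)⟫ = ((ρ * H).trace).re := by
        have e1 : ⟪y, (enc H : E n m)⟫ = ((Xᴴ * H).trace).re := by
          conv_lhs => rw [← enc_dec y]
          rw [inner_enc]
        have e2 : ⟪y, (enc H : E n m)⟫ = ((X * H).trace).re := by
          rw [real_inner_comm]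
          conv_lhs => rw [← enc_dec y]
          rw [inner_enc, hH.eq, trace_mul_comm]
        have e3 : (ρ * H).trace = (1/2 : ℂ) * ((X * H).trace + (Xᴴ * H).trace) := by
          rw [hρdef, smul_mul_assoc, trace_smul, add_mul, trace_add, smul_eq_mul]
        rw [e3, show ((1/2 : ℂ) * ((X * H).trace + (Xᴴ * H).trace)).re
            = (((X * H).trace).re + ((Xᴴ * H).trace).re) / 2 by
          simp [Complex.mul_re, Complex.add_re]; ring]
        rw [← e1, ← e2]
        ring
      rw [key]
      have htρ : 0 ≤ ρ.trace := psd_trace_nonneg hρ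
      rcases eq_or_lt_of_le htρ with hzero | hpos
      · have hz : ρ = 0 := psd_of_trace_eq_zero hρ hzero.symm
        simp [hz]
      · have htre : 0 < ρ.trace.re := by
          have := (Complex.lt_def.mp hpos).1
          simpa using this
        set t : ℝ := ρ.trace.re with ht
        have htc : ρ.trace = (t : ℂ) := by
          have him : ρ.trace.im = 0 := by
            have := (Complex.le_def.mp htρ).2
            simpa using this.symm
          exact Complex.ext (by simp [ht]) (by simp [him])
        have hρ' : (((t⁻¹ : ℝ) : ℂ) • ρ).PosSemidef := psd_smul hρ (inv_nonneg.mpr htre.le)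
        have htr' : ((((t⁻¹ : ℝ) : ℂ)) • ρ).trace = 1 := by
          rw [trace_smul, htc, smul_eq_mul]
          rw [← Complex.ofReal_mul, inv_mul_cancel₀ (ne_of_gt htre)]
          simp
        have hpt' : (partialTranspose ((((t⁻¹ : ℝ) : ℂ)) • ρ)).PosSemidef := by
          rw [pt_smul]
          exact psd_smul hptρ (inv_nonneg.mpr htre.le)
        obtain ⟨-, hre⟩ := hyp _ hρ' htr' hpt'
        have hre2 : 0 ≤ t⁻¹ * ((ρ * H).trace).re := by
          have e4 : ((((t⁻¹ : ℝ) : ℂ) • ρ) * H).trace = ((t⁻¹ : ℝ) : ℂ) * (ρ * H).trace := by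
            rw [smul_mul_assoc, trace_smul, smul_eq_mul]
          rw [e4] at hre
          simpa [Complex.re_ofReal_mul] using hre
        have := mul_nonneg htre.le hre2
        rwa [← mul_assoc, mul_inv_cancel₀ (ne_of_gt htre), one_mul] at this
    rw [hdd] at hmem2
    obtain ⟨H₁, H₂, h1, h2, hsum⟩ := mem_coneC.mp hmem2
    exact ⟨H₁, H₂, h1, h2, by rwa [dec_enc] at hsum⟩
end

section
/- Let n m : ℕ with n, m ≥ 1, and let ρ : Matrix (Fin n × Fin m) (Fin n × Fin m) ℂ be Hermitian with trace 1. Then (ρ is positive semidefinite and Γ(ρ) is positive semidefinite) if and only if for all positive semidefinite matrices P Q : Matrix (Fin n × Fin m) (Fin n × Fin m) ℂ, one has 0 ≤ (Tr(ρ * (P + Γ(Q)))).re. -/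
open Matrix ComplexOrder

lemma psd_trace_nonneg {k : Type*} [Fintype k] [DecidableEq k] {A : Matrix k k ℂ}
    (hA : A.PosSemidef) : 0 ≤ A.trace := by
  rw [Matrix.trace]
  refine Finset.sum_nonneg fun i _ => ?_
  have := hA.dotProduct_mulVec_nonneg (Pi.single i 1)
  have h2 : star (Pi.single i (1:ℂ)) = (Pi.single i 1 : k → ℂ) := by
    funext j; simp [Pi.single_apply, apply_ite (star : ℂ → ℂ)]
  simpa [h2, single_dotProduct] using this

lemma trace_mul_psd_nonneg {k : Type*} [Fintype k] [DecidableEq k] {A B : Matrix k k ℂ}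
    (hA : A.PosSemidef) (hB : B.PosSemidef) : 0 ≤ (A * B).trace := by
  open scoped MatrixOrder in
  obtain ⟨C, rfl⟩ := CStarAlgebra.nonneg_iff_eq_star_mul_self.mp hB.nonneg
  rw [← mul_assoc, trace_mul_comm, ← mul_assoc]
  exact psd_trace_nonneg (hA.mul_mul_conjTranspose_same C)

lemma pt_pt {n m : ℕ} (X : Matrix (Fin n × Fin m) (Fin n × Fin m) ℂ) :
    partialTranspose (partialTranspose X) = X := by
  ext p q; simp [partialTranspose]

lemma pt_hermitian {n m : ℕ} {X : Matrix (Fin n × Fin m) (Fin n × Fin m) ℂ}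
    (hX : X.IsHermitian) : (partialTranspose X).IsHermitian := by
  ext p q
  simpa [partialTranspose, Matrix.conjTranspose_apply] using
    congrFun (congrFun hX (p.1, q.2)) (q.1, p.2)

lemma trace_pt {n m : ℕ} (X Y : Matrix (Fin n × Fin m) (Fin n × Fin m) ℂ) :
    (X * partialTranspose Y).trace = (partialTranspose X * Y).trace := by
  simp only [Matrix.trace, Matrix.diag, Matrix.mul_apply, partialTranspose]
  rw [← Finset.sum_product', ← Finset.sum_product']
  exact Finset.sum_nbij' (fun pq => ((pq.1.1, pq.2.2), (pq.2.1, pq.1.2)))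
    (fun pq => ((pq.1.1, pq.2.2), (pq.2.1, pq.1.2)))
    (by simp) (by simp) (by simp) (by simp) (by simp)

lemma trace_vecMulVec {k : Type*} [Fintype k] (A : Matrix k k ℂ) (x : k → ℂ) :
    (A * vecMulVec x (star x)).trace = star x ⬝ᵥ A *ᵥ x := by
  simp only [Matrix.trace, Matrix.diag, Matrix.mul_apply, vecMulVec_apply, dotProduct,
    mulVec, dotProduct, Pi.star_apply]
  rw [Finset.sum_congr rfl (fun p _ => Finset.mul_sum _ _ _)]
  congr 1; ext p; congr 1; ext q; ring

lemma vecMulVec_psd {k : Type*} [Fintype k] (x : k → ℂ) :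
    (vecMulVec x (star x)).PosSemidef := by
  have : vecMulVec x (star x) = (Matrix.replicateRow Unit (star x))ᴴ * Matrix.replicateRow Unit (star x) := by
    ext i j
    simp [Matrix.mul_apply, vecMulVec_apply, Matrix.replicateRow_apply, Matrix.conjTranspose_apply]
  rw [this]
  exact Matrix.posSemidef_conjTranspose_mul_self _

lemma herm_dot_real {k : Type*} [Fintype k] {A : Matrix k k ℂ} (hA : A.IsHermitian)
    (x : k → ℂ) : (star x ⬝ᵥ A *ᵥ x).im = 0 := by
  have : star (star x ⬝ᵥ A *ᵥ x) = star x ⬝ᵥ A *ᵥ x := by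
    rw [← star_dotProduct, star_mulVec, ← dotProduct_mulVec, hA.eq]
  exact Complex.conj_eq_iff_im.mp this

theorem stmt_1 {n m : ℕ} (hn : 1 ≤ n) (hm : 1 ≤ m)
    (ρ : Matrix (Fin n × Fin m) (Fin n × Fin m) ℂ) (hρ : ρ.IsHermitian)
    (htr : ρ.trace = 1) :
    (ρ.PosSemidef ∧ (partialTranspose ρ).PosSemidef) ↔
    (∀ P Q : Matrix (Fin n × Fin m) (Fin n × Fin m) ℂ,
      P.PosSemidef → Q.PosSemidef →
      0 ≤ ((ρ * (P + partialTranspose Q)).trace).re) := by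
  constructor
  · rintro ⟨h1, h2⟩ P Q hP hQ
    rw [Matrix.mul_add, Matrix.trace_add]
    have t1 := trace_mul_psd_nonneg h1 hP
    have t2 : 0 ≤ (ρ * partialTranspose Q).trace := by
      rw [trace_pt]; exact trace_mul_psd_nonneg h2 hQ
    have := add_nonneg t1 t2
    exact (Complex.le_def.mp this).1
  · intro h
    constructor
    · refine PosSemidef.of_dotProduct_mulVec_nonneg hρ fun x => ?_
      have := h (vecMulVec x (star x)) 0 (vecMulVec_psd x) Matrix.PosSemidef.zero
      rw [Complex.le_def]
      simp only [Complex.zero_re, Complex.zero_im]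
      refine ⟨?_, (herm_dot_real hρ x).symm⟩
      rw [← _root_.trace_vecMulVec]
      have hz : partialTranspose (0 : Matrix (Fin n × Fin m) (Fin n × Fin m) ℂ) = 0 := rfl
      rw [hz, add_zero] at this
      exact this
    · refine PosSemidef.of_dotProduct_mulVec_nonneg (pt_hermitian hρ) fun x => ?_
      have := h 0 (vecMulVec x (star x)) Matrix.PosSemidef.zero (vecMulVec_psd x)
      rw [Complex.le_def]
      simp only [Complex.zero_re, Complex.zero_im]
      refine ⟨?_, (herm_dot_real (pt_hermitian hρ) x).symm⟩
      rw [← _root_.trace_vecMulVec, ← trace_pt]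
      rw [zero_add] at this
      exact this
end

section
/- Let n m : ℕ with n, m ≥ 1, and let ρ : Matrix (Fin n × Fin m) (Fin n × Fin m) ℂ be Hermitian with trace 1. Then the following are equivalent: (i) ρ is separable, i.e., there exist N : ℕ, nonnegative reals p : Fin N → ℝ with ∑ p k = 1, and families σ : Fin N → Matrix (Fin n) (Fin n) ℂ and τ : Fin N → Matrix (Fin m) (Fin m) ℂ of positive semidefinite matrices of trace 1, such that ρ = ∑ k, (p k : ℂ) • (σ k ⊗ₖ τ k); (ii) for every Hermitian H : Matrix (Fin n × Fin m) (Fin n × Fin m) ℂ which is block-positive, i.e., for all x : Fin n → ℂ and y : Fin m → ℂ one has 0 ≤ (star (x ⊗ y) ⬝ᵥ (H *ᵥ (x ⊗ y))).re where (x ⊗ y) (p,s) = x p * y s, one has 0 ≤ (Tr(ρ * H)).re. -/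
open Matrix ComplexOrder Kronecker

/-- Tensor (Kronecker) product of two vectors. -/
def vecTensor {n m : ℕ} (x : Fin n → ℂ) (y : Fin m → ℂ) : Fin n × Fin m → ℂ :=
  fun p => x p.1 * y p.2

section Aux

set_option linter.unusedSectionVars false

open Finset Module

attribute [local instance] Matrix.normedAddCommGroup Matrix.normedSpace

variable {ι κ : Type*} [Fintype ι] [Fintype κ] [DecidableEq ι] [DecidableEq κ]

lemma trace_outer_mul (v : ι → ℂ) (H : Matrix ι ι ℂ) :
    (vecMulVec v (star v) * H).trace = star v ⬝ᵥ (H *ᵥ v) := by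
  simp only [Matrix.trace, Matrix.diag, Matrix.mul_apply, vecMulVec_apply, dotProduct,
    mulVec, Pi.star_apply, Finset.mul_sum]
  rw [Finset.sum_comm]
  exact Finset.sum_congr rfl fun j _ => Finset.sum_congr rfl fun i _ => by ring

lemma trace_outer (v : ι → ℂ) : (vecMulVec v (star v)).trace = star v ⬝ᵥ v := by
  simp [Matrix.trace, Matrix.diag, vecMulVec_apply, dotProduct, mul_comm]

lemma posSemidef_outer (v : ι → ℂ) : (vecMulVec v (star v)).PosSemidef := by
  refine .of_dotProduct_mulVec_nonneg ?_ ?_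
  · ext i j; simp [vecMulVec_apply, mul_comm]
  · intro x
    have : star x ⬝ᵥ (vecMulVec v (star v) *ᵥ x) = star (star v ⬝ᵥ x) * (star v ⬝ᵥ x) := by
      simp [dotProduct, vecMulVec_apply, mulVec, Finset.mul_sum, Finset.sum_mul, star_sum]
      rw [Finset.sum_comm]
      exact Finset.sum_congr rfl fun j _ => Finset.sum_congr rfl fun i _ => by ring
    rw [this]
    exact star_mul_self_nonneg _

lemma isHermitian_outer (v : ι → ℂ) : (vecMulVec v (star v)).IsHermitian :=
  (posSemidef_outer v).1

lemma outer_vecTensor {n m : ℕ} (x : Fin n → ℂ) (y : Fin m → ℂ) :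
    vecMulVec (vecTensor x y) (star (vecTensor x y))
      = vecMulVec x (star x) ⊗ₖ vecMulVec y (star y) := by
  ext ⟨i, s⟩ ⟨j, t⟩
  simp [vecMulVec_apply, kroneckerMap_apply, vecTensor]
  ring

lemma psd_eq_sum_outer {A : Matrix ι ι ℂ} (hA : A.PosSemidef) :
    ∃ v : ι → ι → ℂ, A = ∑ a, vecMulVec (v a) (star (v a)) := by
  obtain ⟨B, rfl⟩ : ∃ B : Matrix ι ι ℂ, A = Bᴴ * B := by
    open MatrixOrder in
    obtain ⟨X, hX, -, rfl⟩ := CFC.exists_sqrt_of_isSelfAdjoint_of_quasispectrumRestricts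
      hA.isHermitian (QuasispectrumRestricts.nnreal_of_nonneg hA.nonneg)
    exact ⟨X, by rw [show Xᴴ = X from hX]⟩
  refine ⟨fun a i => star (B a i), ?_⟩
  ext i j
  simp [Matrix.mul_apply, Matrix.sum_apply, vecMulVec_apply, conjTranspose_apply, mul_comm]

lemma sum_kron_sum {α β : Type*} [Fintype α] [Fintype β] (S : α → Matrix ι ι ℂ)
    (T : β → Matrix κ κ ℂ) :
    (∑ a, S a) ⊗ₖ (∑ b, T b) = ∑ a, ∑ b, S a ⊗ₖ T b := by
  ext ⟨i, s⟩ ⟨j, t⟩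
  simp [kroneckerMap_apply, Matrix.sum_apply, Finset.sum_mul, Finset.mul_sum]
  rw [Finset.sum_comm]

lemma re_trace_kron_mul_nonneg {n m : ℕ} {σ : Matrix (Fin n) (Fin n) ℂ}
    {τ : Matrix (Fin m) (Fin m) ℂ} (hσ : σ.PosSemidef) (hτ : τ.PosSemidef)
    (H : Matrix (Fin n × Fin m) (Fin n × Fin m) ℂ)
    (hbp : ∀ (x : Fin n → ℂ) (y : Fin m → ℂ),
      0 ≤ (star (vecTensor x y) ⬝ᵥ (H *ᵥ vecTensor x y)).re) :
    0 ≤ (((σ ⊗ₖ τ) * H).trace).re := by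
  classical
  obtain ⟨v, rfl⟩ := psd_eq_sum_outer hσ
  obtain ⟨w, rfl⟩ := psd_eq_sum_outer hτ
  rw [sum_kron_sum]
  rw [Finset.sum_mul, Matrix.trace_sum, Complex.re_sum]
  refine Finset.sum_nonneg fun a _ => ?_
  rw [Finset.sum_mul, Matrix.trace_sum, Complex.re_sum]
  refine Finset.sum_nonneg fun b _ => ?_
  rw [← outer_vecTensor, trace_outer_mul]
  exact hbp _ _

lemma smul_decomp (c : ℂ) (M : Matrix ι ι ℂ) :
    c • M = c.re • M + c.im • (Complex.I • M) := by
  ext i j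
  simp only [Matrix.smul_apply, Matrix.add_apply, smul_eq_mul, Complex.real_smul]
  conv_lhs => rw [← Complex.re_add_im c]
  ring

lemma rep_functional (f : Matrix ι ι ℂ →L[ℝ] ℝ) :
    ∃ G : Matrix ι ι ℂ, ∀ A : Matrix ι ι ℂ, f A = ((A * G).trace).re := by
  classical
  set G : Matrix ι ι ℂ := fun j i =>
    (f (Matrix.single i j 1) : ℂ) - f (Complex.I • Matrix.single i j 1) * Complex.I with hG
  refine ⟨G, fun A => ?_⟩
  have hre : ((A * G).trace).re = ∑ i, ∑ j, (A i j * G j i).re := by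
    simp [Matrix.trace, Matrix.diag, Matrix.mul_apply, Complex.re_sum]
  rw [hre]
  conv_lhs => rw [matrix_eq_sum_single A]
  rw [map_sum]
  refine Finset.sum_congr rfl fun i _ => ?_
  rw [map_sum]
  refine Finset.sum_congr rfl fun j _ => ?_
  have h1 : Matrix.single i j (A i j) = (A i j) • Matrix.single i j 1 := by
    rw [smul_single, smul_eq_mul, mul_one]
  rw [h1, smul_decomp (A i j), map_add, _root_.map_smul, _root_.map_smul, hG]
  simp only [Complex.mul_re, Complex.sub_re, Complex.sub_im, Complex.mul_im,
    Complex.ofReal_re, Complex.ofReal_im, Complex.I_re, Complex.I_im, smul_eq_mul]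
  ring

lemma extend_sum_aux {α M : Type*} [Fintype α] [AddCommMonoid M]
    (e : α ↪ ι) (g : α → M) :
    ∑ j, Function.extend (⇑e) g (fun _ => 0) j = ∑ i, g i := by
  classical
  rw [← Finset.sum_subset (Finset.subset_univ (Finset.univ.image ⇑e))
    (fun j _ hj => ?_), Finset.sum_image (fun a _ b _ h => e.injective h)]
  · exact Finset.sum_congr rfl fun i _ => e.injective.extend_apply _ _ _
  · refine Function.extend_apply' _ _ _ fun ⟨i, hi⟩ => hj ?_
    exact Finset.mem_image.2 ⟨i, Finset.mem_univ _, hi⟩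

variable {E : Type*} [NormedAddCommGroup E] [NormedSpace ℝ E] [FiniteDimensional ℝ E]

lemma convexHull_eq_image_comb {s : Set E} (hs : s.Nonempty) :
    convexHull ℝ s = (fun p : (Fin (finrank ℝ E + 1) → ℝ) × (Fin (finrank ℝ E + 1) → E) =>
        ∑ i, p.1 i • p.2 i) ''
      ((stdSimplex ℝ (Fin (finrank ℝ E + 1))) ×ˢ Set.univ.pi fun _ => s) := by
  classical
  apply Set.Subset.antisymm
  · intro x hx
    obtain ⟨α, hfin, z, w, hzs, hai, hwpos, hw1, hsum⟩ :=
      eq_pos_convex_span_of_mem_convexHull hx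
    letI := hfin
    have hcard : Fintype.card α ≤ finrank ℝ E + 1 := by
      refine le_trans hai.card_le_finrank_succ ?_
      exact Nat.add_le_add_right (Submodule.finrank_le _) 1
    obtain ⟨e⟩ := Function.Embedding.nonempty_of_card_le
      (β := Fin (finrank ℝ E + 1)) (by simpa using hcard)
    obtain ⟨z₀, hz₀⟩ := hs
    refine ⟨(Function.extend (⇑e) w fun _ => 0, Function.extend (⇑e) z fun _ => z₀),
      ⟨⟨?_, ?_⟩, ?_⟩, ?_⟩
    · intro j
      show 0 ≤ Function.extend (⇑e) w (fun _ => 0) j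
      rcases em (∃ i, e i = j) with ⟨i, rfl⟩ | h
      · rw [e.injective.extend_apply]; exact (hwpos i).le
      · rw [Function.extend_apply' _ _ _ h]
    · show ∑ j, Function.extend (⇑e) w (fun _ => 0) j = 1
      rw [extend_sum_aux e w, hw1]
    · intro j _
      show Function.extend (⇑e) z (fun _ => z₀) j ∈ s
      rcases em (∃ i, e i = j) with ⟨i, rfl⟩ | h
      · rw [e.injective.extend_apply]; exact hzs ⟨i, rfl⟩
      · rw [Function.extend_apply' _ _ _ h]; exact hz₀
    · show (∑ j, Function.extend (⇑e) w (fun _ => 0) j • Function.extend (⇑e) z (fun _ => z₀) j) = x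
      rw [← hsum]
      have : ∀ j, Function.extend (⇑e) w (fun _ => 0) j • Function.extend (⇑e) z (fun _ => z₀) j
          = Function.extend (⇑e) (fun i => w i • z i) (fun _ => 0) j := by
        intro j
        rcases em (∃ i, e i = j) with ⟨i, rfl⟩ | h
        · rw [e.injective.extend_apply, e.injective.extend_apply, e.injective.extend_apply]
        · rw [Function.extend_apply' _ _ _ h, Function.extend_apply' _ _ _ h,
            Function.extend_apply' _ _ _ h, zero_smul]
      rw [Finset.sum_congr rfl fun j _ => this j, extend_sum_aux e _]
  · rintro x ⟨⟨w, z⟩, ⟨⟨hw0, hw1⟩, hz⟩, rfl⟩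
    exact (convex_convexHull ℝ s).sum_mem (fun i _ => hw0 i) hw1
      fun i _ => subset_convexHull ℝ s (hz i (Set.mem_univ i))

lemma isCompact_convexHull_of_isCompact {s : Set E} (hs : IsCompact s) :
    IsCompact (convexHull ℝ s) := by
  rcases s.eq_empty_or_nonempty with rfl | hne
  · simp
  rw [convexHull_eq_image_comb hne]
  refine ((isCompact_stdSimplex _ _).prod (isCompact_univ_pi fun _ => hs)).image ?_
  exact continuous_finset_sum _ fun i _ =>
    ((continuous_apply i).comp continuous_fst).smul ((continuous_apply i).comp continuous_snd)

lemma real_smul_matrix (r : ℝ) (M : Matrix ι κ ℂ) :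
    (r : ℂ) • M = r • M := by
  ext i j; simp [Matrix.smul_apply, Complex.real_smul]

lemma exists_normalized {n : ℕ} {x : Fin n → ℂ} (hx : x ≠ 0) :
    ∃ (c : ℝ) (x' : Fin n → ℂ), 0 < c ∧ star x' ⬝ᵥ x' = 1 ∧ x = c • x' := by
  have hd : star x ⬝ᵥ x = ((∑ i, Complex.normSq (x i) : ℝ) : ℂ) := by
    push_cast
    refine Finset.sum_congr rfl fun i _ => ?_
    rw [Pi.star_apply, Complex.star_def, ← Complex.normSq_eq_conj_mul_self]
  have hdpos : 0 < ∑ i, Complex.normSq (x i) := by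
    rcases Function.ne_iff.mp hx with ⟨i, hi⟩
    refine Finset.sum_pos' (fun j _ => Complex.normSq_nonneg _) ⟨i, Finset.mem_univ i, ?_⟩
    simpa [Complex.normSq_pos] using hi
  set c := Real.sqrt (∑ i, Complex.normSq (x i)) with hc
  have hcpos : 0 < c := Real.sqrt_pos.mpr hdpos
  refine ⟨c, c⁻¹ • x, hcpos, ?_, ?_⟩
  · rw [star_smul, smul_dotProduct, dotProduct_smul, hd]
    rw [star_trivial]
    rw [smul_smul, Complex.real_smul]
    norm_cast
    rw [← mul_inv, Real.mul_self_sqrt hdpos.le]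
    exact inv_mul_cancel₀ hdpos.ne'
  · rw [smul_smul, mul_inv_cancel₀ hcpos.ne', one_smul]

lemma vecTensor_smul_left {n m : ℕ} (c : ℝ) (x : Fin n → ℂ) (y : Fin m → ℂ) :
    vecTensor (c • x) y = c • vecTensor x y := by
  ext p; simp [vecTensor, Pi.smul_apply, smul_eq_mul]; ring

lemma vecTensor_smul_right {n m : ℕ} (c : ℝ) (x : Fin n → ℂ) (y : Fin m → ℂ) :
    vecTensor x (c • y) = c • vecTensor x y := by
  ext p; simp [vecTensor, Pi.smul_apply, smul_eq_mul]; ring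

lemma dot_smul_scale (c : ℝ) (v : ι → ℂ) (H : Matrix ι ι ℂ) :
    (star (c • v) ⬝ᵥ (H *ᵥ (c • v))).re = c ^ 2 * (star v ⬝ᵥ (H *ᵥ v)).re := by
  rw [star_smul, smul_dotProduct, Matrix.mulVec_smul, dotProduct_smul, star_trivial]
  rw [smul_smul]
  rw [Complex.real_smul, Complex.re_ofReal_mul]
  ring

lemma isCompact_unitVecs (n : ℕ) : IsCompact {x : Fin n → ℂ | star x ⬝ᵥ x = 1} := by
  have hc : Continuous fun x : Fin n → ℂ => star x ⬝ᵥ x := by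
    refine continuous_finset_sum _ fun i _ => ?_
    exact (continuous_star.comp (continuous_apply i)).mul (continuous_apply i)
  refine Metric.isCompact_of_isClosed_isBounded (isClosed_eq hc continuous_const) ?_
  rw [isBounded_iff_forall_norm_le]
  refine ⟨1, fun x hx => ?_⟩
  have hsum : ∑ i, ‖x i‖ ^ 2 = 1 := by
    have := congrArg Complex.re hx
    rw [show (star x ⬝ᵥ x) = ∑ i, star (x i) * x i from rfl] at this
    rw [Complex.re_sum] at this
    rw [Complex.one_re] at this
    rw [← this]
    refine Finset.sum_congr rfl fun i _ => ?_
    rw [Complex.sq_norm, Complex.normSq_apply]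
    simp [Complex.mul_re]
  rw [pi_norm_le_iff_of_nonneg zero_le_one]
  intro i
  have h1 : ‖x i‖ ^ 2 ≤ 1 := by
    rw [← hsum]
    exact Finset.single_le_sum (f := fun j => ‖x j‖ ^ 2) (fun j _ => sq_nonneg _)
      (Finset.mem_univ i)
  nlinarith [norm_nonneg (x i)]

/-- Pure product states. -/
noncomputable def purod (n m : ℕ) : Set (Matrix (Fin n × Fin m) (Fin n × Fin m) ℂ) :=
  (fun q : (Fin n → ℂ) × (Fin m → ℂ) =>
      vecMulVec (vecTensor q.1 q.2) (star (vecTensor q.1 q.2))) ''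
    ({x | star x ⬝ᵥ x = 1} ×ˢ {y | star y ⬝ᵥ y = 1})

lemma isCompact_purod (n m : ℕ) : IsCompact (purod n m) := by
  refine ((isCompact_unitVecs n).prod (isCompact_unitVecs m)).image ?_
  refine continuous_matrix fun p q => ?_
  simp only [vecMulVec_apply, vecTensor, Pi.star_apply]
  fun_prop

end Aux
section Main

open Finset Module

attribute [local instance] Matrix.normedAddCommGroup Matrix.normedSpace

lemma unit_vec_exists {n : ℕ} (hn : 1 ≤ n) : ∃ x : Fin n → ℂ, star x ⬝ᵥ x = 1 := by
  refine ⟨fun i => if i = ⟨0, hn⟩ then 1 else 0, ?_⟩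
  simp [dotProduct, Pi.star_apply, apply_ite]

lemma vecTensor_dot {n m : ℕ} (x : Fin n → ℂ) (y : Fin m → ℂ) :
    star (vecTensor x y) ⬝ᵥ vecTensor x y = (star x ⬝ᵥ x) * (star y ⬝ᵥ y) := by
  simp only [dotProduct, vecTensor, Pi.star_apply, Fintype.sum_prod_type, Finset.sum_mul,
    Finset.mul_sum, star_mul']
  rw [Finset.sum_comm]
  refine Finset.sum_congr rfl fun s _ => Finset.sum_congr rfl fun i _ => by ring

theorem stmt_2 {n m : ℕ} (hn : 1 ≤ n) (hm : 1 ≤ m)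
    (ρ : Matrix (Fin n × Fin m) (Fin n × Fin m) ℂ) (hρ : ρ.IsHermitian)
    (htr : ρ.trace = 1) :
    (∃ (N : ℕ) (p : Fin N → ℝ) (σ : Fin N → Matrix (Fin n) (Fin n) ℂ)
        (τ : Fin N → Matrix (Fin m) (Fin m) ℂ),
      (∀ k, 0 ≤ p k) ∧ (∑ k, p k) = 1 ∧
      (∀ k, (σ k).PosSemidef) ∧ (∀ k, (σ k).trace = 1) ∧
      (∀ k, (τ k).PosSemidef) ∧ (∀ k, (τ k).trace = 1) ∧
      ρ = ∑ k, (p k : ℂ) • (σ k ⊗ₖ τ k)) ↔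
    (∀ H : Matrix (Fin n × Fin m) (Fin n × Fin m) ℂ, H.IsHermitian →
      (∀ (x : Fin n → ℂ) (y : Fin m → ℂ),
        0 ≤ (star (vecTensor x y) ⬝ᵥ (H *ᵥ vecTensor x y)).re) →
      0 ≤ ((ρ * H).trace).re) := by
  classical
  constructor
  · rintro ⟨N, p, σ, τ, hp0, hp1, hσp, hσt, hτp, hτt, rfl⟩ H hH hbp
    rw [Finset.sum_mul, Matrix.trace_sum, Complex.re_sum]
    refine Finset.sum_nonneg fun k _ => ?_
    rw [smul_mul_assoc, Matrix.trace_smul, smul_eq_mul, Complex.re_ofReal_mul]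
    exact mul_nonneg (hp0 k) (re_trace_kron_mul_nonneg (hσp k) (hτp k) H hbp)
  · intro h2
    by_contra hnot
    set S := convexHull ℝ (purod n m) with hS
    have hρS : ρ ∉ S := by
      intro hmem
      apply hnot
      obtain ⟨x₀, hx₀⟩ := unit_vec_exists hn
      obtain ⟨y₀, hy₀⟩ := unit_vec_exists hm
      have hne : (purod n m).Nonempty := ⟨_, ⟨(x₀, y₀), ⟨hx₀, hy₀⟩, rfl⟩⟩
      rw [hS, convexHull_eq_image_comb hne] at hmem
      obtain ⟨⟨w, z⟩, ⟨⟨hw0, hw1⟩, hzmem⟩, hsum⟩ := hmem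
      have hz' : ∀ j, z j ∈ purod n m := fun j => hzmem j (Set.mem_univ j)
      choose q hq hdef using hz'
      refine ⟨_, w, fun j => vecMulVec (q j).1 (star (q j).1),
        fun j => vecMulVec (q j).2 (star (q j).2), hw0, hw1,
        fun j => posSemidef_outer _, fun j => ?_, fun j => posSemidef_outer _,
        fun j => ?_, ?_⟩
      · rw [trace_outer]; exact (hq j).1
      · rw [trace_outer]; exact (hq j).2
      · rw [← hsum]
        dsimp only
        refine Finset.sum_congr rfl fun j _ => ?_
        have hzj := hdef j
        dsimp only at hzj
        rw [real_smul_matrix, ← outer_vecTensor, hzj]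
    have hconv : Convex ℝ S := convex_convexHull ℝ _
    have hclosed : IsClosed S :=
      (isCompact_convexHull_of_isCompact (isCompact_purod n m)).isClosed
    haveI : LocallyConvexSpace ℝ (Matrix (Fin n × Fin m) (Fin n × Fin m) ℂ) :=
      NormedSpace.toLocallyConvexSpace' ℂ
    obtain ⟨f, u, hfρ, hfS⟩ := geometric_hahn_banach_point_closed hconv hclosed hρS
    obtain ⟨G, hG⟩ := rep_functional f
    set H0 : Matrix (Fin n × Fin m) (Fin n × Fin m) ℂ := (2⁻¹ : ℝ) • (G + Gᴴ) with hH0def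
    have hH0 : H0.IsHermitian := by
      show H0ᴴ = H0
      rw [hH0def, Matrix.conjTranspose_smul, Matrix.conjTranspose_add,
        Matrix.conjTranspose_conjTranspose, star_trivial, add_comm]
    have hkey : ∀ A : Matrix (Fin n × Fin m) (Fin n × Fin m) ℂ, A.IsHermitian →
        ((A * H0).trace).re = f A := by
      intro A hA
      have h2' : (A * Gᴴ).trace = star ((A * G).trace) := by
        calc (A * Gᴴ).trace = (Gᴴ * A).trace := Matrix.trace_mul_comm _ _
          _ = (Gᴴ * Aᴴ).trace := by rw [hA.eq]
          _ = ((A * G)ᴴ).trace := by rw [Matrix.conjTranspose_mul]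
          _ = star ((A * G).trace) := Matrix.trace_conjTranspose _
      calc ((A * H0).trace).re
          = ((2⁻¹ : ℝ) • ((A * G).trace + star ((A * G).trace))).re := by
            rw [hH0def, Matrix.mul_smul, Matrix.mul_add, Matrix.trace_smul,
              Matrix.trace_add, h2']
        _ = f A := by
            rw [hG A]
            simp only [Complex.real_smul, Complex.re_ofReal_mul, Complex.add_re,
              Complex.star_def, Complex.conj_re]
            ring
    set Hm : Matrix (Fin n × Fin m) (Fin n × Fin m) ℂ := H0 - (u : ℂ) • 1 with hHmdef
    have hHm : Hm.IsHermitian := by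
      refine hH0.sub ?_
      show ((u : ℂ) • (1 : Matrix (Fin n × Fin m) (Fin n × Fin m) ℂ))ᴴ = _
      rw [Matrix.conjTranspose_smul, Matrix.conjTranspose_one, Complex.star_def,
        Complex.conj_ofReal]
    have htrsub : ∀ A : Matrix (Fin n × Fin m) (Fin n × Fin m) ℂ,
        (A * Hm).trace = (A * H0).trace - (u : ℂ) * A.trace := by
      intro A
      have hone : A * ((u : ℂ) • 1) = (u : ℂ) • A := by
        rw [Matrix.mul_smul, Matrix.mul_one]
      rw [hHmdef, Matrix.mul_sub, Matrix.trace_sub, hone, Matrix.trace_smul, smul_eq_mul]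
    have hpure : ∀ (x : Fin n → ℂ) (y : Fin m → ℂ), star x ⬝ᵥ x = 1 → star y ⬝ᵥ y = 1 →
        0 ≤ (star (vecTensor x y) ⬝ᵥ (Hm *ᵥ vecTensor x y)).re := by
      intro x y hx hy
      have hmem : vecMulVec (vecTensor x y) (star (vecTensor x y)) ∈ S :=
        subset_convexHull ℝ _ ⟨(x, y), ⟨hx, hy⟩, rfl⟩
      have hfgt := hfS _ hmem
      rw [← trace_outer_mul, htrsub]
      have htr1 : (vecMulVec (vecTensor x y) (star (vecTensor x y))).trace = 1 := by
        rw [trace_outer, vecTensor_dot, hx, hy, one_mul]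
      rw [htr1, mul_one, Complex.sub_re, Complex.ofReal_re,
        hkey _ (isHermitian_outer _)]
      linarith
    have hbp : ∀ (x : Fin n → ℂ) (y : Fin m → ℂ),
        0 ≤ (star (vecTensor x y) ⬝ᵥ (Hm *ᵥ vecTensor x y)).re := by
      intro x y
      rcases eq_or_ne x 0 with rfl | hx
      · have h0 : vecTensor (0 : Fin n → ℂ) y = 0 := by ext p; simp [vecTensor]
        rw [h0]; simp
      rcases eq_or_ne y 0 with rfl | hy
      · have h0 : vecTensor x (0 : Fin m → ℂ) = 0 := by ext p; simp [vecTensor]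
        rw [h0]; simp
      obtain ⟨cx, x', hcx, hx', rfl⟩ := exists_normalized hx
      obtain ⟨cy, y', hcy, hy', rfl⟩ := exists_normalized hy
      rw [vecTensor_smul_left, vecTensor_smul_right, smul_smul, dot_smul_scale]
      exact mul_nonneg (sq_nonneg _) (hpure _ _ hx' hy')
    have hfinal := h2 Hm hHm hbp
    rw [htrsub, htr, mul_one, Complex.sub_re, Complex.ofReal_re, hkey ρ hρ] at hfinal
    linarith

end Main
end

section
/- Let k n m : ℕ with k, n, m ≥ 1. Let A : Matrix (Fin k × Fin n) (Fin k × Fin n) ℂ be positive semidefinite and assume that its partial transpose with respect to the first factor, Γ₁(A) defined by Γ₁(A) (i,p) (j,r) = A (j,p) (i,r), is also positive semidefinite. Let x : Fin k → (Fin m → ℂ). Then for every positive semidefinite C : Matrix (Fin n × Fin m) (Fin n × Fin m) ℂ, the complex number ∑ i, ∑ j, ∑ p, ∑ r, ∑ t, ∑ v, A (i,p) (j,r) * star (x i t) * C (r,t) (p,v) * (x j v) is real and nonnegative. -/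
open Matrix ComplexOrder

/-- Partial transpose with respect to the first tensor factor. -/
def partialTransposeFst {k n : ℕ} (A : Matrix (Fin k × Fin n) (Fin k × Fin n) ℂ) :
    Matrix (Fin k × Fin n) (Fin k × Fin n) ℂ :=
  fun p q => A (q.1, p.2) (p.1, q.2)

theorem stmt_9 {k n m : ℕ} (hk : 1 ≤ k) (hn : 1 ≤ n) (hm : 1 ≤ m)
    (A : Matrix (Fin k × Fin n) (Fin k × Fin n) ℂ) (hA : A.PosSemidef)
    (hAτ : (partialTransposeFst A).PosSemidef)
    (x : Fin k → (Fin m → ℂ))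
    (C : Matrix (Fin n × Fin m) (Fin n × Fin m) ℂ) (hC : C.PosSemidef) :
    (∑ i, ∑ j, ∑ p, ∑ r, ∑ t, ∑ v,
        A (i, p) (j, r) * star (x i t) * C (r, t) (p, v) * (x j v)).im = 0 ∧
    0 ≤ (∑ i, ∑ j, ∑ p, ∑ r, ∑ t, ∑ v,
        A (i, p) (j, r) * star (x i t) * C (r, t) (p, v) * (x j v)).re := by
  obtain ⟨B, hB⟩ : ∃ B : Matrix (Fin n × Fin m) (Fin n × Fin m) ℂ, C = Bᴴ * B := by
    open scoped MatrixOrder Matrix.Norms.L2Operator in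
    obtain ⟨B, hB⟩ := CStarAlgebra.nonneg_iff_eq_star_mul_self.mp hC.nonneg
    exact ⟨B, by rw [hB, Matrix.star_eq_conjTranspose]⟩
  subst hB
  have key : (∑ i, ∑ j, ∑ p, ∑ r, ∑ t, ∑ v,
        A (i, p) (j, r) * star (x i t) * (Bᴴ * B) (r, t) (p, v) * (x j v))
      = ∑ s, star (fun (q : Fin k × Fin n) => ∑ t, star (x q.1 t) * star (B s (q.2, t)))
          ⬝ᵥ (partialTransposeFst A) *ᵥ
          (fun (q : Fin k × Fin n) => ∑ t, star (x q.1 t) * star (B s (q.2, t))) := by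
    have L : (∑ z : Fin k × Fin k × Fin n × Fin n × Fin m × Fin m × Fin n × Fin m,
          A (z.1, z.2.2.1) (z.2.1, z.2.2.2.1) * star (x z.1 z.2.2.2.2.1) *
            (star (B (z.2.2.2.2.2.2.1, z.2.2.2.2.2.2.2) (z.2.2.2.1, z.2.2.2.2.1)) *
              B (z.2.2.2.2.2.2.1, z.2.2.2.2.2.2.2) (z.2.2.1, z.2.2.2.2.2.1)) *
            x z.2.1 z.2.2.2.2.2.1)
        = (∑ i, ∑ j, ∑ p, ∑ r, ∑ t, ∑ v,
          A (i, p) (j, r) * star (x i t) * (Bᴴ * B) (r, t) (p, v) * (x j v)) := by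
      simp only [Matrix.mul_apply, Matrix.conjTranspose_apply, Fintype.sum_prod_type,
        Finset.mul_sum, Finset.sum_mul, Pi.star_apply]
    have R : (∑ z : Fin n × Fin m × Fin k × Fin n × Fin k × Fin n × Fin m × Fin m,
          x z.2.2.1 z.2.2.2.2.2.2.2 * B (z.1, z.2.1) (z.2.2.2.1, z.2.2.2.2.2.2.2) *
            (A (z.2.2.2.2.1, z.2.2.2.1) (z.2.2.1, z.2.2.2.2.2.1) *
              (star (x z.2.2.2.2.1 z.2.2.2.2.2.2.1) *
                star (B (z.1, z.2.1) (z.2.2.2.2.2.1, z.2.2.2.2.2.2.1)))))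
        = ∑ s, star (fun (q : Fin k × Fin n) => ∑ t, star (x q.1 t) * star (B s (q.2, t)))
            ⬝ᵥ (partialTransposeFst A) *ᵥ
            (fun (q : Fin k × Fin n) => ∑ t, star (x q.1 t) * star (B s (q.2, t))) := by
      simp only [dotProduct, Matrix.mulVec, partialTransposeFst, Fintype.sum_prod_type,
        Finset.mul_sum, Finset.sum_mul, star_sum, star_mul', star_star, Pi.star_apply]
    rw [← L, ← R]
    refine Fintype.sum_equiv
      ⟨fun z => (z.2.2.2.2.2.2.1, z.2.2.2.2.2.2.2, z.2.1, z.2.2.1, z.1, z.2.2.2.1,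
          z.2.2.2.2.1, z.2.2.2.2.2.1),
       fun z => (z.2.2.2.2.1, z.2.2.1, z.2.2.2.1, z.2.2.2.2.2.1, z.2.2.2.2.2.2.1,
          z.2.2.2.2.2.2.2, z.1, z.2.1),
       fun z => rfl, fun z => rfl⟩ _ _ ?_
    intro z
    obtain ⟨i, j, p, r, t, v, s1, s2⟩ := z
    simp only [Equiv.coe_fn_mk]
    ring
  have hS : (0:ℂ) ≤ ∑ i, ∑ j, ∑ p, ∑ r, ∑ t, ∑ v,
        A (i, p) (j, r) * star (x i t) * (Bᴴ * B) (r, t) (p, v) * (x j v) := by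
    rw [key]
    exact Finset.sum_nonneg fun s _ => hAτ.dotProduct_mulVec_nonneg _
  rw [Complex.le_def] at hS
  exact ⟨hS.2.symm, hS.1⟩
end

section
/- Let n m N : ℕ, let p : Fin N → ℝ with 0 ≤ p k for all k, and let σ : Fin N → Matrix (Fin n) (Fin n) ℂ and τ : Fin N → Matrix (Fin m) (Fin m) ℂ be families of positive semidefinite matrices. Set ρ := ∑ k, (p k : ℂ) • (σ k ⊗ₖ τ k). Then ρ is positive semidefinite and Γ(ρ) is positive semidefinite. -/
open Matrix ComplexOrder Kronecker

lemma kron_psd' {n m : ℕ} {A : Matrix (Fin n) (Fin n) ℂ} {B : Matrix (Fin m) (Fin m) ℂ}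
    (hA : A.PosSemidef) (hB : B.PosSemidef) : (A ⊗ₖ B).PosSemidef := by
  exact hA.kronecker hB

lemma smul_psd' {ι : Type*} [Fintype ι] {A : Matrix ι ι ℂ} (c : ℝ) (hc : 0 ≤ c)
    (hA : A.PosSemidef) : ((c : ℂ) • A).PosSemidef := by
  rw [posSemidef_iff_dotProduct_mulVec]
  constructor
  · unfold Matrix.IsHermitian
    rw [conjTranspose_smul, hA.1]
    simp
  · intro x
    have h0 := hA.dotProduct_mulVec_nonneg x
    rw [smul_mulVec, dotProduct_smul]
    exact mul_nonneg (by exact_mod_cast hc) h0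

lemma sum_psd' {ι : Type*} [Fintype ι] {N : ℕ} (f : Fin N → Matrix ι ι ℂ)
    (hf : ∀ k, (f k).PosSemidef) : (∑ k, f k).PosSemidef := by
  rw [posSemidef_iff_dotProduct_mulVec]
  constructor
  · unfold Matrix.IsHermitian
    rw [conjTranspose_sum]
    exact Finset.sum_congr rfl fun k _ => (hf k).1
  · intro x
    have h1 : (∑ k, f k) *ᵥ x = ∑ k, (f k *ᵥ x) :=
      map_sum (Matrix.mulVec.addMonoidHomLeft x) f Finset.univ
    have h2 : star x ⬝ᵥ ∑ k, (f k *ᵥ x) = ∑ k, star x ⬝ᵥ (f k *ᵥ x) := by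
      simp only [dotProduct, Finset.sum_apply, Finset.mul_sum]
      exact Finset.sum_comm
    rw [h1, h2]
    exact Finset.sum_nonneg fun k _ => (hf k).dotProduct_mulVec_nonneg x

theorem stmt_10 {n m N : ℕ} (p : Fin N → ℝ) (hp : ∀ k, 0 ≤ p k)
    (σ : Fin N → Matrix (Fin n) (Fin n) ℂ) (hσ : ∀ k, (σ k).PosSemidef)
    (τ : Fin N → Matrix (Fin m) (Fin m) ℂ) (hτ : ∀ k, (τ k).PosSemidef) :
    (∑ k, (p k : ℂ) • (σ k ⊗ₖ τ k)).PosSemidef ∧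
    (partialTranspose (∑ k, (p k : ℂ) • (σ k ⊗ₖ τ k))).PosSemidef := by
  constructor
  · refine sum_psd' _ fun k => ?_
    exact smul_psd' _ (hp k) (kron_psd' (hσ k) (hτ k))
  · have heq : partialTranspose (∑ k, (p k : ℂ) • (σ k ⊗ₖ τ k)) =
        ∑ k, (p k : ℂ) • (σ k ⊗ₖ (τ k)ᵀ) := by
      ext ⟨i, s⟩ ⟨j, t⟩
      simp only [partialTranspose, Matrix.sum_apply, Matrix.smul_apply,
        kroneckerMap_apply, transpose_apply, smul_eq_mul]
    rw [heq]
    refine sum_psd' _ fun k => ?_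
    exact smul_psd' _ (hp k) (kron_psd' (hσ k) (hτ k).transpose)
end
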